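/- Along the constraint z_o = F(z_i) (defined by ψ_{k_1}(z_i) = ψ_{k_2}(z_o)), one has z_i · d/dz_i [log( z_i/(p_{k_1}(z_i) p_{k_2−1}(F(z_i))) )] = H(z_i, z_o)/(1 + φ_{k_2−1}(z_o) − φ_{k_2}(z_o)), where H(z_i,z_o) = (1 − φ_{k_1}(z_i))(1 − φ_{k_2}(z_o)) − φ_{k_1−1}(z_i)φ_{k_2−1}(z_o). -/

import Mathlib

open Real Filter Set

/-- `truncExpSum k z = Σ_{j≥k} z^j/j!`. -/
noncomputable def truncExpSum (k : ℕ) (z : ℝ) : ℝ :=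
  ∑' j : ℕ, if k ≤ j then z ^ j / (Nat.factorial j : ℝ) else 0

/-- `poisTail k z = P(Poi(z) ≥ k) = e^{-z} Σ_{j≥k} z^j/j!`. -/
noncomputable def poisTail (k : ℕ) (z : ℝ) : ℝ := Real.exp (-z) * truncExpSum k z

/-- Mean of Poisson(z) conditioned on being ≥ k: `ψ_k(z) = z f_{k-1}(z)/f_k(z)`. -/
noncomputable def truncMean (k : ℕ) (z : ℝ) : ℝ :=
  z * truncExpSum (k - 1) z / truncExpSum k z

/-- Second moment of the truncated Poisson. -/
noncomputable def truncSecondMoment (k : ℕ) (z : ℝ) : ℝ :=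
  (∑' j : ℕ, if k ≤ j then (j : ℝ) ^ 2 * z ^ j / (Nat.factorial j : ℝ) else 0)
    / truncExpSum k z

/-- Variance of the truncated Poisson. -/
noncomputable def truncVar (k : ℕ) (z : ℝ) : ℝ :=
  truncSecondMoment k z - (truncMean k z) ^ 2

/-- `φ_r(z) = z·P(Poi(z)=r−1)/P(Poi(z)≥r)` for `r ≥ 1`, with `φ_0 := 0`. -/
noncomputable def phiP (r : ℕ) (z : ℝ) : ℝ :=
  if r = 0 then 0
  else z * (Real.exp (-z) * z ^ (r - 1) / (Nat.factorial (r - 1) : ℝ)) / poisTail r z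

/-- `H(z_i,z_o) = (1 − φ_{k_1}(z_i))(1 − φ_{k_2}(z_o)) − φ_{k_1−1}(z_i)φ_{k_2−1}(z_o)`. -/
noncomputable def Hfun (k1 k2 : ℕ) (zi zo : ℝ) : ℝ :=
  (1 - phiP k1 zi) * (1 - phiP k2 zo) - phiP (k1 - 1) zi * phiP (k2 - 1) zo

/-- `Ψ(z_i,z_o) = max{ z_i/(p_{k_1}(z_i)p_{k_2−1}(z_o)), z_o/(p_{k_2}(z_o)p_{k_1−1}(z_i)) }`. -/
noncomputable def Psi (k1 k2 : ℕ) (zi zo : ℝ) : ℝ :=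
  max (zi / (poisTail k1 zi * poisTail (k2 - 1) zo))
      (zo / (poisTail k2 zo * poisTail (k1 - 1) zi))

open scoped Topology

section AuxLemmas


section Aux

lemma summable_abs_pow_fact (z : ℝ) : Summable (fun j : ℕ => |z| ^ j / (Nat.factorial j : ℝ)) :=
  Real.summable_pow_div_factorial |z|

lemma summable_pow_fact (z : ℝ) : Summable (fun j : ℕ => z ^ j / (Nat.factorial j : ℝ)) :=
  Real.summable_pow_div_factorial z

lemma summable_ite_pow_fact (k : ℕ) (z : ℝ) :
    Summable (fun j : ℕ => if k ≤ j then z ^ j / (Nat.factorial j : ℝ) else 0) := by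
  refine Summable.of_norm_bounded (summable_abs_pow_fact z) (fun j => ?_)
  by_cases h : k ≤ j
  · simp only [h, if_true, Real.norm_eq_abs, abs_div, abs_pow, Nat.abs_cast]
    exact le_rfl
  · simp only [h, if_false, norm_zero]
    positivity

lemma tes_eq (k : ℕ) (z : ℝ) :
    tsum (fun j : ℕ => if k ≤ j then z ^ j / (Nat.factorial j : ℝ) else 0)
      = Real.exp z - ∑ j ∈ Finset.range k, z ^ j / (Nat.factorial j : ℝ) := by
  have hexp : Real.exp z = ∑' j : ℕ, z ^ j / (Nat.factorial j : ℝ) := by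
    rw [Real.exp_eq_exp_ℝ, NormedSpace.exp_eq_tsum_div]
  have hsplit : ∀ j : ℕ, z ^ j / (Nat.factorial j : ℝ)
      = (if k ≤ j then z ^ j / (Nat.factorial j : ℝ) else 0)
        + (if k ≤ j then 0 else z ^ j / (Nat.factorial j : ℝ)) := by
    intro j; by_cases h : k ≤ j <;> simp [h]
  have hs2 : Summable (fun j : ℕ => if k ≤ j then 0 else z ^ j / (Nat.factorial j : ℝ)) := by
    apply summable_of_finite_support
    apply Set.Finite.subset (Set.finite_Iio k)
    intro j hj
    simp only [Function.mem_support] at hj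
    by_contra hc
    simp only [Set.mem_Iio, not_lt] at hc
    simp [hc] at hj
  have h2 : (∑' j : ℕ, if k ≤ j then 0 else z ^ j / (Nat.factorial j : ℝ))
      = ∑ j ∈ Finset.range k, z ^ j / (Nat.factorial j : ℝ) := by
    rw [tsum_eq_sum (s := Finset.range k)]
    · apply Finset.sum_congr rfl
      intro j hj
      simp only [Finset.mem_range] at hj
      simp [Nat.not_le.mpr hj]
    · intro j hj
      simp only [Finset.mem_range, not_lt] at hj
      simp [hj]
  have hadd := Summable.tsum_add (summable_ite_pow_fact k z) hs2
  have key : Real.exp z = (∑' j : ℕ, if k ≤ j then z ^ j / (Nat.factorial j : ℝ) else 0)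
      + ∑ j ∈ Finset.range k, z ^ j / (Nat.factorial j : ℝ) := by
    rw [hexp, tsum_congr hsplit, hadd, h2]
  linarith [key]

end Aux

open Real Filter Set Topology


lemma tes_eq' (k : ℕ) (z : ℝ) :
    truncExpSum k z = Real.exp z - ∑ j ∈ Finset.range k, z ^ j / (Nat.factorial j : ℝ) :=
  tes_eq k z

lemma tes_succ (k : ℕ) (z : ℝ) :
    truncExpSum k z = z ^ k / (Nat.factorial k : ℝ) + truncExpSum (k + 1) z := by
  rw [tes_eq', tes_eq', Finset.sum_range_succ]; ring

lemma summable_shift (k : ℕ) (z : ℝ) :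
    Summable (fun m : ℕ => z ^ (k + m) / (Nat.factorial (k + m) : ℝ)) := by
  refine Summable.of_norm_bounded ((summable_abs_pow_fact z).mul_left (|z| ^ k)) (fun m => ?_)
  have h1 : (Nat.factorial m : ℝ) ≤ (Nat.factorial (k + m) : ℝ) := by
    exact_mod_cast Nat.factorial_le (Nat.le_add_left m k)
  have h2 : (0:ℝ) < Nat.factorial m := by exact_mod_cast Nat.factorial_pos m
  rw [Real.norm_eq_abs, abs_div, abs_pow, Nat.abs_cast, pow_add]
  rw [div_le_iff₀ (by exact_mod_cast Nat.factorial_pos (k+m))]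
  calc |z| ^ k * |z| ^ m = (|z| ^ k * (|z| ^ m / (Nat.factorial m : ℝ))) * (Nat.factorial m : ℝ) := by
        field_simp
    _ ≤ (|z| ^ k * (|z| ^ m / (Nat.factorial m : ℝ))) * (Nat.factorial (k + m) : ℝ) := by
        apply mul_le_mul_of_nonneg_left h1; positivity

lemma tes_shift (k : ℕ) (z : ℝ) :
    truncExpSum k z = ∑' m : ℕ, z ^ (k + m) / (Nat.factorial (k + m) : ℝ) := by
  induction k with
  | zero =>
    rw [tes_eq']
    simp only [Finset.range_zero, Finset.sum_empty, sub_zero, zero_add]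
    rw [Real.exp_eq_exp_ℝ, NormedSpace.exp_eq_tsum_div]
  | succ n ih =>
    have hpeel := Summable.tsum_eq_zero_add (summable_shift n z)
    have hcongr : (∑' m : ℕ, z ^ (n + (m + 1)) / (Nat.factorial (n + (m + 1)) : ℝ))
        = ∑' m : ℕ, z ^ (n + 1 + m) / (Nat.factorial (n + 1 + m) : ℝ) := by
      apply tsum_congr; intro m
      have h : n + (m + 1) = n + 1 + m := by omega
      rw [h]
    have := tes_succ n z
    rw [ih, hpeel] at this
    rw [← hcongr]
    simp only [add_zero] at this
    linarith [this]

lemma tes_pos (k : ℕ) {z : ℝ} (hz : 0 < z) : 0 < truncExpSum k z := by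
  apply Summable.tsum_pos (summable_ite_pow_fact k z) (fun j => ?_) k
  · simp only [le_refl, if_true]; positivity
  · by_cases h : k ≤ j <;> simp [h]; positivity

lemma hasDerivAt_partial_sum (k : ℕ) (z : ℝ) :
    HasDerivAt (fun z : ℝ => ∑ j ∈ Finset.range (k + 1), z ^ j / (Nat.factorial j : ℝ))
      (∑ j ∈ Finset.range k, z ^ j / (Nat.factorial j : ℝ)) z := by
  have h : ∀ j ∈ Finset.range (k+1), HasDerivAt (fun z : ℝ => z ^ j / (Nat.factorial j : ℝ))
      ((j : ℝ) * z ^ (j - 1) / (Nat.factorial j : ℝ)) z := by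
    intro j _
    simpa [div_eq_mul_inv] using (hasDerivAt_pow j z).div_const (Nat.factorial j : ℝ)
  have hsum := HasDerivAt.fun_sum h
  refine hsum.congr_deriv (Eq.symm ?_)
  rw [Finset.sum_range_succ' (fun j => (j : ℝ) * z ^ (j - 1) / (Nat.factorial j : ℝ)) k]
  simp only [Nat.cast_zero, zero_mul, Nat.factorial_zero, Nat.cast_one, zero_div, add_zero,
    Nat.cast_add, Nat.cast_one, Nat.add_sub_cancel]
  apply Finset.sum_congr rfl
  intro j _
  rw [Nat.factorial_succ]
  push_cast
  field_simp

lemma tes_hasDerivAt (k : ℕ) (z : ℝ) :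
    HasDerivAt (fun z => truncExpSum (k + 1) z) (truncExpSum k z) z := by
  have : (fun z => truncExpSum (k+1) z)
      = fun z => Real.exp z - ∑ j ∈ Finset.range (k+1), z ^ j / (Nat.factorial j : ℝ) :=
    funext fun z => tes_eq' (k+1) z
  rw [this, tes_eq']
  exact (Real.hasDerivAt_exp z).sub (hasDerivAt_partial_sum k z)

lemma tes_contDiff (k : ℕ) : ContDiff ℝ ⊤ (fun z => truncExpSum k z) := by
  have : (fun z => truncExpSum k z)
      = fun z => Real.exp z - ∑ j ∈ Finset.range k, z ^ j / (Nat.factorial j : ℝ) :=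
    funext fun z => tes_eq' k z
  rw [this]
  apply Real.contDiff_exp.sub
  apply ContDiff.sum
  intro j _
  exact (contDiff_id.pow j).div_const _

lemma cs_tsum (s : ℕ → ℝ) (hnn : ∀ m, 0 ≤ s m) (h0 : Summable s)
    (h1 : Summable (fun m : ℕ => (m : ℝ) * s m)) (h2 : Summable (fun m : ℕ => (m : ℝ) ^ 2 * s m)) :
    (∑' m : ℕ, (m : ℝ) * s m) ^ 2 ≤ ((∑' m : ℕ, s m) - s 0) * (∑' m : ℕ, (m : ℝ) ^ 2 * s m) := by
  set f : ℕ → ℝ := fun m => if m = 0 then 0 else Real.sqrt (s m) with hf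
  set g : ℕ → ℝ := fun m => (m : ℝ) * Real.sqrt (s m) with hg
  have hfg : ∀ m, f m * g m = (m : ℝ) * s m := by
    intro m
    by_cases h : m = 0
    · simp [hf, hg, h]
    · simp only [hf, hg, h, if_false]
      rw [show Real.sqrt (s m) * ((m:ℝ) * Real.sqrt (s m)) = (m:ℝ) * (Real.sqrt (s m) * Real.sqrt (s m)) by ring,
        Real.mul_self_sqrt (hnn m)]
  have hf2 : ∀ m, f m ^ 2 = (if m = 0 then 0 else s m) := by
    intro m
    by_cases h : m = 0
    · simp [hf, h]
    · simp only [hf, h, if_false]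
      exact Real.sq_sqrt (hnn m)
  have hg2 : ∀ m, g m ^ 2 = (m : ℝ) ^ 2 * s m := by
    intro m
    simp only [hg, mul_pow]
    rw [Real.sq_sqrt (hnn m)]
  have hsumf2 : Summable (fun m => f m ^ 2) := by
    refine Summable.of_norm_bounded h0 (fun m => ?_)
    rw [hf2]
    by_cases h : m = 0 <;> simp [h, abs_of_nonneg (hnn m)]
    · exact hnn 0
  have hsumg2 : Summable (fun m => g m ^ 2) := by
    refine Summable.congr h2 (fun m => (hg2 m).symm)
  have htf2 : (∑' m : ℕ, f m ^ 2) = (∑' m : ℕ, s m) - s 0 := by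
    have e1 := Summable.tsum_eq_zero_add h0
    have e2 := Summable.tsum_eq_zero_add hsumf2
    have h00 : f 0 ^ 2 = 0 := by simp [hf]
    have hrest : (∑' m : ℕ, f (m + 1) ^ 2) = ∑' m : ℕ, s (m + 1) := by
      apply tsum_congr; intro m; rw [hf2 (m + 1), if_neg (Nat.succ_ne_zero m)]
    rw [e2, h00, hrest, e1]; ring
  have htg2 : (∑' m : ℕ, g m ^ 2) = ∑' m : ℕ, (m : ℝ) ^ 2 * s m := tsum_congr hg2
  have hb : ∀ n : ℕ, (∑ i ∈ Finset.range n, (i : ℝ) * s i) ^ 2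
      ≤ ((∑' m : ℕ, s m) - s 0) * (∑' m : ℕ, (m : ℝ) ^ 2 * s m) := by
    intro n
    have cs := Finset.sum_mul_sq_le_sq_mul_sq (Finset.range n) f g
    have e : (∑ i ∈ Finset.range n, (i : ℝ) * s i) = ∑ i ∈ Finset.range n, f i * g i :=
      Finset.sum_congr rfl (fun i _ => (hfg i).symm)
    rw [e]
    refine le_trans cs ?_
    rw [← htf2, ← htg2]
    have hA : (∑ i ∈ Finset.range n, f i ^ 2) ≤ ∑' m : ℕ, f m ^ 2 :=
      Summable.sum_le_tsum _ (fun i _ => sq_nonneg _) hsumf2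
    have hB : (∑ i ∈ Finset.range n, g i ^ 2) ≤ ∑' m : ℕ, g m ^ 2 :=
      Summable.sum_le_tsum _ (fun i _ => sq_nonneg _) hsumg2
    have hAnn : (0:ℝ) ≤ ∑ i ∈ Finset.range n, f i ^ 2 := Finset.sum_nonneg fun i _ => sq_nonneg _
    have hBnn : (0:ℝ) ≤ ∑ i ∈ Finset.range n, g i ^ 2 := Finset.sum_nonneg fun i _ => sq_nonneg _
    have htgnn : (0:ℝ) ≤ ∑' m : ℕ, g m ^ 2 := tsum_nonneg fun m => sq_nonneg _
    exact mul_le_mul hA hB hBnn (le_trans hAnn hA)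
  have hten : Tendsto (fun n => (∑ i ∈ Finset.range n, (i : ℝ) * s i) ^ 2) atTop
      (𝓝 ((∑' m : ℕ, (m : ℝ) * s m) ^ 2)) := by
    have := h1.hasSum.tendsto_sum_nat
    simpa [pow_two] using this.mul this
  exact le_of_tendsto hten (Filter.Eventually.of_forall hb)

lemma summable_mul_shift (k : ℕ) {z : ℝ} (hz : 0 < z) :
    Summable (fun m : ℕ => (m : ℝ) * (z ^ (k + m) / (Nat.factorial (k + m) : ℝ))) := by
  refine Summable.of_norm_bounded (((Real.summable_pow_div_factorial (2*z)).mul_left (z ^ k))) (fun m => ?_)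
  have hfm : (0:ℝ) < Nat.factorial m := by exact_mod_cast Nat.factorial_pos m
  have hfkm : (0:ℝ) < Nat.factorial (k + m) := by exact_mod_cast Nat.factorial_pos (k + m)
  have hfle : (Nat.factorial m : ℝ) ≤ (Nat.factorial (k + m) : ℝ) := by
    exact_mod_cast Nat.factorial_le (Nat.le_add_left m k)
  have hm2 : (m : ℝ) ≤ 2 ^ m := by exact_mod_cast (Nat.lt_two_pow_self (n := m)).le
  have h : (m : ℝ) * (z ^ (k + m) / (Nat.factorial (k + m) : ℝ))
      ≤ z ^ k * ((2 * z) ^ m / (Nat.factorial m : ℝ)) := by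
    have e : z ^ k * ((2 * z) ^ m / (Nat.factorial m : ℝ))
        = 2 ^ m * (z ^ (k + m) / (Nat.factorial m : ℝ)) := by
      rw [mul_pow, pow_add]; ring
    rw [e]
    apply mul_le_mul hm2 ?_ (by positivity) (by positivity)
    gcongr
  rw [Real.norm_eq_abs, abs_of_nonneg (by positivity)]
  exact h

lemma summable_sq_shift (k : ℕ) {z : ℝ} (hz : 0 < z) :
    Summable (fun m : ℕ => (m : ℝ) ^ 2 * (z ^ (k + m) / (Nat.factorial (k + m) : ℝ))) := by
  refine Summable.of_norm_bounded (((Real.summable_pow_div_factorial (4*z)).mul_left (z ^ k))) (fun m => ?_)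
  have hfm : (0:ℝ) < Nat.factorial m := by exact_mod_cast Nat.factorial_pos m
  have hfkm : (0:ℝ) < Nat.factorial (k + m) := by exact_mod_cast Nat.factorial_pos (k + m)
  have hfle : (Nat.factorial m : ℝ) ≤ (Nat.factorial (k + m) : ℝ) := by
    exact_mod_cast Nat.factorial_le (Nat.le_add_left m k)
  have hm2 : (m : ℝ) ≤ 2 ^ m := by exact_mod_cast (Nat.lt_two_pow_self (n := m)).le
  have hm4 : (m : ℝ) ^ 2 ≤ 4 ^ m := by
    calc (m:ℝ)^2 ≤ (2^m : ℝ)^2 := by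
          apply pow_le_pow_left₀ (Nat.cast_nonneg m) hm2
      _ = 4 ^ m := by rw [← pow_mul, show (4:ℝ) = 2^2 by norm_num, ← pow_mul]; ring_nf
  have h : (m : ℝ) ^ 2 * (z ^ (k + m) / (Nat.factorial (k + m) : ℝ))
      ≤ z ^ k * ((4 * z) ^ m / (Nat.factorial m : ℝ)) := by
    have e : z ^ k * ((4 * z) ^ m / (Nat.factorial m : ℝ))
        = 4 ^ m * (z ^ (k + m) / (Nat.factorial m : ℝ)) := by
      rw [mul_pow, pow_add]; ring
    rw [e]
    apply mul_le_mul hm4 ?_ (by positivity) (by positivity)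
    gcongr
  rw [Real.norm_eq_abs, abs_of_nonneg (by positivity)]
  exact h
lemma term_shift (j : ℕ) (z : ℝ) :
    ((j + 1 : ℕ) : ℝ) * (z ^ (j + 1) / (Nat.factorial (j + 1) : ℝ))
      = z * (z ^ j / (Nat.factorial j : ℝ)) := by
  have h0 : (0:ℝ) < Nat.factorial j := by exact_mod_cast Nat.factorial_pos j
  have h1 : (0:ℝ) < Nat.factorial (j+1) := by exact_mod_cast Nat.factorial_pos (j+1)
  rw [Nat.factorial_succ]
  push_cast
  rw [pow_succ]
  field_simp

lemma Spos (n : ℕ) {z : ℝ} (hz : 0 < z) :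
    0 < truncExpSum (n+1) z * truncExpSum (n+2) z
        + z * truncExpSum n z * truncExpSum (n+2) z - z * (truncExpSum (n+1) z) ^ 2 := by
  set a := truncExpSum n z with ha
  set b := truncExpSum (n+1) z with hb
  set c := truncExpSum (n+2) z with hc
  set g : ℕ → ℝ := fun m => z ^ (n+2+m) / (Nat.factorial (n+2+m) : ℝ) with hg
  have hgnn : ∀ m, 0 ≤ g m := fun m => by rw [hg]; positivity
  have hgpos : ∀ m, 0 < g m := fun m => by rw [hg]; positivity
  have sA : Summable g := summable_shift (n+2) z
  have s1 : Summable (fun m : ℕ => (m : ℝ) * g m) := summable_mul_shift (n+2) hz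
  have s2 : Summable (fun m : ℕ => (m : ℝ) ^ 2 * g m) := summable_sq_shift (n+2) hz
  have hA : (∑' m : ℕ, g m) = c := (tes_shift (n+2) z).symm
  have hterm1 : ∀ m : ℕ, ((n+2+m : ℕ) : ℝ) * g m
      = z * (z ^ (n+1+m) / (Nat.factorial (n+1+m) : ℝ)) := by
    intro m
    have h : n + 2 + m = (n + 1 + m) + 1 := by omega
    show ((n+2+m : ℕ) : ℝ) * (z ^ (n+2+m) / (Nat.factorial (n+2+m) : ℝ)) = _
    rw [h]
    exact term_shift (n+1+m) z
  have hP1 : (∑' m : ℕ, ((n+2+m : ℕ) : ℝ) * g m) = z * b := by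
    rw [tsum_congr hterm1, tsum_mul_left, hb, tes_shift (n+1) z]
  have hterm2 : ∀ m : ℕ, ((n+2+m : ℕ) : ℝ) * (((n+1+m : ℕ) : ℝ) * g m)
      = z ^ 2 * (z ^ (n+m) / (Nat.factorial (n+m) : ℝ)) := by
    intro m
    rw [show ((n+2+m : ℕ) : ℝ) * (((n+1+m : ℕ) : ℝ) * g m)
        = ((n+1+m : ℕ) : ℝ) * (((n+2+m : ℕ) : ℝ) * g m) by ring, hterm1 m]
    have h : n + 1 + m = (n + m) + 1 := by omega
    rw [show ((n+1+m : ℕ) : ℝ) * (z * (z ^ (n+1+m) / (Nat.factorial (n+1+m) : ℝ)))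
        = z * (((n+1+m : ℕ) : ℝ) * (z ^ (n+1+m) / (Nat.factorial (n+1+m) : ℝ))) by ring, h,
      term_shift (n+m) z]
    ring
  have hP2 : (∑' m : ℕ, ((n+2+m : ℕ) : ℝ) * (((n+1+m : ℕ) : ℝ) * g m)) = z ^ 2 * a := by
    rw [tsum_congr hterm2, tsum_mul_left, ha, tes_shift n z]
  -- linear decompositions
  have e1 : (∑' m : ℕ, ((n+2+m : ℕ) : ℝ) * g m)
      = (∑' m : ℕ, (m : ℝ) * g m) + ((n:ℝ)+2) * (∑' m : ℕ, g m) := by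
    rw [← tsum_mul_left, ← Summable.tsum_add s1 (sA.mul_left _)]
    apply tsum_congr; intro m; push_cast; ring
  have hD : (∑' m : ℕ, (m : ℝ) * g m) = z * b - ((n:ℝ)+2) * c := by
    rw [hA] at e1; rw [hP1] at e1; linarith
  have e2 : (∑' m : ℕ, ((n+2+m : ℕ) : ℝ) * (((n+1+m : ℕ) : ℝ) * g m))
      = (∑' m : ℕ, (m : ℝ) ^ 2 * g m)
        + ((2*(n:ℝ)+3) * (∑' m : ℕ, (m : ℝ) * g m) + ((n:ℝ)+2) * (((n:ℝ)+1) * (∑' m : ℕ, g m))) := by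
    rw [← tsum_mul_left (a := ((n:ℝ)+1)), ← tsum_mul_left (a := ((n:ℝ)+2)),
      ← tsum_mul_left (a := (2*(n:ℝ)+3)),
      ← Summable.tsum_add (s1.mul_left _) ((sA.mul_left _).mul_left _),
      ← Summable.tsum_add s2 ((s1.mul_left _).add ((sA.mul_left _).mul_left _))]
    apply tsum_congr; intro m; push_cast; ring
  have hE : (∑' m : ℕ, (m : ℝ) ^ 2 * g m)
      = z ^ 2 * a - (2*(n:ℝ)+3) * (∑' m : ℕ, (m : ℝ) * g m) - ((n:ℝ)+2) * ((n:ℝ)+1) * c := by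
    rw [hA, hP2] at e2; linarith
  have hcs := cs_tsum g hgnn sA s1 s2
  rw [hA] at hcs
  have hEpos : 0 < (∑' m : ℕ, (m : ℝ) ^ 2 * g m) := by
    apply Summable.tsum_pos s2 (fun m => by positivity) 1
    have := hgpos 1
    norm_num
    exact this
  have hg0 : 0 < g 0 := hgpos 0
  have key : 0 < c * (∑' m : ℕ, (m : ℝ) ^ 2 * g m) - (∑' m : ℕ, (m : ℝ) * g m) ^ 2 := by
    nlinarith [hcs, hEpos, hg0]
  have hfin : c * (∑' m : ℕ, (m : ℝ) ^ 2 * g m) - (∑' m : ℕ, (m : ℝ) * g m) ^ 2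
      = z * (b * c + z * a * c - z * b ^ 2) := by
    rw [hE, hD]; ring
  rw [hfin] at key
  nlinarith [key, hz]
lemma phiP_eq (m : ℕ) {z : ℝ} (hz : 0 < z) :
    phiP (m+1) z = z ^ (m+1) / ((Nat.factorial m : ℝ) * truncExpSum (m+1) z) := by
  have h1 : (0:ℝ) < truncExpSum (m+1) z := tes_pos (m+1) hz
  have h2 : Real.exp (-z) ≠ 0 := Real.exp_ne_zero (-z)
  have h3 : (0:ℝ) < Nat.factorial m := by exact_mod_cast Nat.factorial_pos m
  show (if m + 1 = 0 then (0:ℝ)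
    else z * (Real.exp (-z) * z ^ (m+1-1) / (Nat.factorial (m+1-1) : ℝ))
      / poisTail (m+1) z) = _
  rw [if_neg (Nat.succ_ne_zero m)]
  show z * (Real.exp (-z) * z ^ m / (Nat.factorial m : ℝ))
      / (Real.exp (-z) * truncExpSum (m+1) z) = _
  rw [pow_succ]
  field_simp

lemma truncMean_pos (k : ℕ) {z : ℝ} (hz : 0 < z) : 0 < truncMean k z := by
  unfold truncMean
  have := tes_pos (k-1) hz
  have := tes_pos k hz
  positivity

lemma Bpos (n : ℕ) {z : ℝ} (hz : 0 < z) :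
    0 < 1 + phiP (n+1) z - phiP (n+2) z := by
  have hb : (0:ℝ) < truncExpSum (n+1) z := tes_pos (n+1) hz
  have hc : (0:ℝ) < truncExpSum (n+2) z := tes_pos (n+2) hz
  have h3 : (0:ℝ) < Nat.factorial n := by exact_mod_cast Nat.factorial_pos n
  have h4 : (0:ℝ) < Nat.factorial (n+1) := by exact_mod_cast Nat.factorial_pos (n+1)
  have hS := Spos n hz
  have heq : 1 + phiP (n+1) z - phiP (n+2) z
      = (truncExpSum (n+1) z * truncExpSum (n+2) z
          + z * truncExpSum n z * truncExpSum (n+2) z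
          - z * (truncExpSum (n+1) z) ^ 2) / (truncExpSum (n+1) z * truncExpSum (n+2) z) := by
    rw [phiP_eq n hz, phiP_eq (n+1) hz]
    set C := truncExpSum (n+2) z with hC
    have e2 : truncExpSum (n+1) z = z ^ (n+1) / (Nat.factorial (n+1) : ℝ) + C := tes_succ (n+1) z
    have e1 : truncExpSum n z = z ^ n / (Nat.factorial n : ℝ) + truncExpSum (n+1) z := tes_succ n z
    have hqC : z ^ (n+1) / (Nat.factorial (n+1) : ℝ) + C ≠ 0 := by
      rw [← e2]; exact ne_of_gt hb
    have hCne : C ≠ 0 := ne_of_gt hc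
    rw [e1, e2]
    field_simp
    ring
  rw [heq]
  positivity

lemma psi_hasDerivAt (n : ℕ) {z : ℝ} (hz : 0 < z) :
    HasDerivAt (truncMean (n+2))
      (truncMean (n+2) z / z * (1 + phiP (n+1) z - phiP (n+2) z)) z := by
  have hb : (0:ℝ) < truncExpSum (n+1) z := tes_pos (n+1) hz
  have hc : (0:ℝ) < truncExpSum (n+2) z := tes_pos (n+2) hz
  have h3 : (0:ℝ) < Nat.factorial n := by exact_mod_cast Nat.factorial_pos n
  have h4 : (0:ℝ) < Nat.factorial (n+1) := by exact_mod_cast Nat.factorial_pos (n+1)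
  have hu : HasDerivAt (fun z => z * truncExpSum (n+1) z)
      (1 * truncExpSum (n+1) z + z * truncExpSum n z) z :=
    (hasDerivAt_id z).mul (tes_hasDerivAt n z)
  have hv := tes_hasDerivAt (n+1) z
  have hvne : truncExpSum (n+2) z ≠ 0 := ne_of_gt hc
  have hdiv := hu.fun_div hv hvne
  have hfun : truncMean (n+2) = fun z => z * truncExpSum (n+1) z / truncExpSum (n+2) z := rfl
  rw [hfun]
  refine hdiv.congr_deriv (Eq.symm ?_)
  rw [phiP_eq n hz, phiP_eq (n+1) hz]
  show z * truncExpSum (n+1) z / truncExpSum (n+2) z / z * _ = _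
  set C := truncExpSum (n+2) z with hC
  have e2 : truncExpSum (n+1) z = z ^ (n+1) / (Nat.factorial (n+1) : ℝ) + C := tes_succ (n+1) z
  have e1 : truncExpSum n z = z ^ n / (Nat.factorial n : ℝ) + truncExpSum (n+1) z := tes_succ n z
  have hqC : z ^ (n+1) / (Nat.factorial (n+1) : ℝ) + C ≠ 0 := by
    rw [← e2]; exact ne_of_gt hb
  have hCne : C ≠ 0 := ne_of_gt hc
  rw [e1, e2]
  field_simp
  ring
lemma psi_contDiffAt (n : ℕ) {z : ℝ} (hz : 0 < z) :
    ContDiffAt ℝ 1 (truncMean (n+2)) z := by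
  have h : truncMean (n+2) = fun z => z * truncExpSum (n+1) z / truncExpSum (n+2) z := rfl
  rw [h]
  have h1 : ContDiffAt ℝ ⊤ (fun z : ℝ => z * truncExpSum (n+1) z / truncExpSum (n+2) z) z :=
    ((contDiff_id.mul (tes_contDiff (n+1))).contDiffAt.div (tes_contDiff (n+2)).contDiffAt
      (ne_of_gt (tes_pos _ hz)))
  exact h1.of_le le_top

lemma psi_strictMonoOn (n : ℕ) : StrictMonoOn (truncMean (n+2)) (Ioi 0) := by
  apply strictMonoOn_of_deriv_pos (convex_Ioi 0)
  · intro x hx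
    exact (psi_hasDerivAt n hx).continuousAt.continuousWithinAt
  · intro x hx
    rw [interior_Ioi] at hx
    rw [(psi_hasDerivAt n hx).deriv]
    exact mul_pos (div_pos (truncMean_pos (n+2) hx) hx) (Bpos n hx)

lemma poisTail_pos (k : ℕ) {z : ℝ} (hz : 0 < z) : 0 < poisTail k z :=
  mul_pos (Real.exp_pos _) (tes_pos k hz)

lemma log_poisTail (k : ℕ) {z : ℝ} (hz : 0 < z) :
    Real.log (poisTail k z) = -z + Real.log (truncExpSum k z) := by
  unfold poisTail
  rw [Real.log_mul (Real.exp_ne_zero _) (ne_of_gt (tes_pos k hz)), Real.log_exp]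

theorem stmt13' (m1 m2 : ℕ) (F : ℝ → ℝ)
    (hF : ∀ z : ℝ, 0 < z → 0 < F z ∧ truncMean (m2+2) (F z) = truncMean (m1+2) z)
    (zi : ℝ) (hzi : 0 < zi) :
    HasDerivAt (fun z : ℝ => Real.log (z / (poisTail (m1+2) z * poisTail (m2+1) (F z))))
      (Hfun (m1+2) (m2+2) zi (F zi) / (zi * (1 + phiP (m2+1) (F zi) - phiP (m2+2) (F zi)))) zi := by
  set zo := F zi with hzodef
  obtain ⟨hzo, hcon⟩ := hF zi hzi
  -- derivative data for the two truncated means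
  have hD1 := psi_hasDerivAt m1 hzi
  have hD2 := psi_hasDerivAt m2 hzo
  have hB1 := Bpos m1 hzi
  have hB2 := Bpos m2 hzo
  have hpsi1 := truncMean_pos (m1+2) hzi
  have hpsi2 := truncMean_pos (m2+2) hzo
  set D1 := truncMean (m1+2) zi / zi * (1 + phiP (m1+1) zi - phiP (m1+2) zi) with hD1def
  set D2 := truncMean (m2+2) zo / zo * (1 + phiP (m2+1) zo - phiP (m2+2) zo) with hD2def
  have hD2pos : 0 < D2 := mul_pos (div_pos hpsi2 hzo) hB2
  have hD2ne : D2 ≠ 0 := ne_of_gt hD2pos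
  -- strict derivative and local inverse of truncMean (m2+2) at zo
  have hstrict : HasStrictDerivAt (truncMean (m2+2)) D2 zo := by
    have h := (psi_contDiffAt m2 hzo).hasStrictDerivAt one_ne_zero
    rwa [hD2.deriv] at h
  set g := hstrict.localInverse (truncMean (m2+2)) D2 zo hD2ne with hgdef
  have hginv : HasStrictDerivAt g D2⁻¹ (truncMean (m2+2) zo) := hstrict.to_localInverse hD2ne
  have hleft : ∀ᶠ x in 𝓝 zo, g (truncMean (m2+2) x) = x :=
    (hstrict.hasStrictFDerivAt_equiv hD2ne).eventually_left_inverse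
  have hright : ∀ᶠ y in 𝓝 (truncMean (m2+2) zo), truncMean (m2+2) (g y) = y :=
    (hstrict.hasStrictFDerivAt_equiv hD2ne).eventually_right_inverse
  have hgzo : g (truncMean (m2+2) zo) = zo := hleft.self_of_nhds
  -- continuity of truncMean (m1+2) at zi, tending to the common value
  have hc1 : Tendsto (truncMean (m1+2)) (𝓝 zi) (𝓝 (truncMean (m2+2) zo)) := by
    have := hD1.continuousAt.tendsto
    rwa [← hcon] at this
  have ev_right : ∀ᶠ z in 𝓝 zi, truncMean (m2+2) (g (truncMean (m1+2) z)) = truncMean (m1+2) z :=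
    hc1.eventually hright
  have htend2 : Tendsto (fun z => g (truncMean (m1+2) z)) (𝓝 zi) (𝓝 zo) := by
    have hgc : Tendsto g (𝓝 (truncMean (m2+2) zo)) (𝓝 zo) := by
      have := hginv.hasDerivAt.continuousAt.tendsto
      rwa [hgzo] at this
    exact hgc.comp hc1
  have ev_pos_g : ∀ᶠ z in 𝓝 zi, 0 < g (truncMean (m1+2) z) :=
    htend2.eventually (eventually_gt_nhds hzo)
  have ev_pos_z : ∀ᶠ z in 𝓝 zi, 0 < z := eventually_gt_nhds hzi
  have hFeq : F =ᶠ[𝓝 zi] fun z => g (truncMean (m1+2) z) := by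
    filter_upwards [ev_right, ev_pos_g, ev_pos_z] with z h1 h2 h3
    obtain ⟨hFz, hcz⟩ := hF z h3
    exact (psi_strictMonoOn m2).injOn (Set.mem_Ioi.mpr hFz) (Set.mem_Ioi.mpr h2)
      (hcz.trans h1.symm)
  have hDg : HasDerivAt g D2⁻¹ (truncMean (m1+2) zi) := by
    have := hginv.hasDerivAt
    rwa [hcon] at this
  have hcomp : HasDerivAt (fun z => g (truncMean (m1+2) z)) (D2⁻¹ * D1) zi :=
    hDg.comp zi hD1
  have hFder : HasDerivAt F (D2⁻¹ * D1) zi := hcomp.congr_of_eventuallyEq hFeq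
  -- the explicit logarithmic decomposition
  set G : ℝ → ℝ := fun z => Real.log z - (-z + Real.log (truncExpSum (m1+2) z))
      - (-(F z) + Real.log (truncExpSum (m2+1) (F z))) with hGdef
  have hTG : (fun z : ℝ => Real.log (z / (poisTail (m1+2) z * poisTail (m2+1) (F z))))
      =ᶠ[𝓝 zi] G := by
    filter_upwards [ev_pos_z] with z hz0
    have hFz := (hF z hz0).1
    have hp1 := poisTail_pos (m1+2) hz0
    have hp2 := poisTail_pos (m2+1) hFz
    rw [hGdef]
    simp only []
    rw [Real.log_div (ne_of_gt hz0) (ne_of_gt (mul_pos hp1 hp2)),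
      Real.log_mul (ne_of_gt hp1) (ne_of_gt hp2), log_poisTail _ hz0, log_poisTail _ hFz]
    ring
  have h_log : HasDerivAt Real.log zi⁻¹ zi := Real.hasDerivAt_log (ne_of_gt hzi)
  have h_p1 : HasDerivAt (fun z : ℝ => -z + Real.log (truncExpSum (m1+2) z))
      (-1 + truncExpSum (m1+1) zi / truncExpSum (m1+2) zi) zi :=
    ((hasDerivAt_id zi).neg).add ((tes_hasDerivAt (m1+1) zi).log (ne_of_gt (tes_pos _ hzi)))
  have h_inner : HasDerivAt (fun w : ℝ => -w + Real.log (truncExpSum (m2+1) w))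
      (-1 + truncExpSum m2 zo / truncExpSum (m2+1) zo) zo :=
    ((hasDerivAt_id zo).neg).add ((tes_hasDerivAt m2 zo).log (ne_of_gt (tes_pos _ hzo)))
  have h_p2 : HasDerivAt (fun z : ℝ => -(F z) + Real.log (truncExpSum (m2+1) (F z)))
      ((-1 + truncExpSum m2 zo / truncExpSum (m2+1) zo) * (D2⁻¹ * D1)) zi :=
    h_inner.comp zi hFder
  have hG : HasDerivAt G (zi⁻¹ - (-1 + truncExpSum (m1+1) zi / truncExpSum (m1+2) zi)
      - (-1 + truncExpSum m2 zo / truncExpSum (m2+1) zo) * (D2⁻¹ * D1)) zi :=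
    (h_log.sub h_p1).sub h_p2
  have hT : HasDerivAt (fun z : ℝ => Real.log (z / (poisTail (m1+2) z * poisTail (m2+1) (F z))))
      (zi⁻¹ - (-1 + truncExpSum (m1+1) zi / truncExpSum (m1+2) zi)
      - (-1 + truncExpSum m2 zo / truncExpSum (m2+1) zo) * (D2⁻¹ * D1)) zi :=
    hG.congr_of_eventuallyEq hTG
  -- now identify the derivative value
  convert hT using 1
  -- value computation
  have e1 : -1 + truncExpSum (m1+1) zi / truncExpSum (m1+2) zi = phiP (m1+2) zi / zi := by
    rw [phiP_eq (m1+1) hzi, tes_succ (m1+1) zi]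
    have hc1' := tes_pos (m1+2) hzi
    have hf : (0:ℝ) < Nat.factorial (m1+1) := by exact_mod_cast Nat.factorial_pos (m1+1)
    field_simp
    ring
  have e2 : -1 + truncExpSum m2 zo / truncExpSum (m2+1) zo = phiP (m2+1) zo / zo := by
    rw [hzodef, phiP_eq m2 hzo, tes_succ m2 (F zi)]
    have hc2' := tes_pos (m2+1) hzo
    have hf : (0:ℝ) < Nat.factorial m2 := by exact_mod_cast Nat.factorial_pos m2
    field_simp
    ring
  have e3 : D2⁻¹ * D1 = zo / zi * ((1 + phiP (m1+1) zi - phiP (m1+2) zi)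
      / (1 + phiP (m2+1) zo - phiP (m2+2) zo)) := by
    rw [hD1def, hD2def, hcon]
    have hw : truncMean (m1+2) zi ≠ 0 := by rw [← hcon]; exact ne_of_gt hpsi2
    field_simp
  rw [e1, e2, e3]
  have hH : Hfun (m1+2) (m2+2) zi zo
      = (1 - phiP (m1+2) zi) * (1 - phiP (m2+2) zo) - phiP (m1+1) zi * phiP (m2+1) zo := rfl
  rw [hH]
  have hB2ne : 1 + phiP (m2+1) zo - phiP (m2+2) zo ≠ 0 := ne_of_gt hB2
  have hzo' : zo ≠ 0 := ne_of_gt hzo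
  field_simp
  ring

end AuxLemmas

/-- along the constraint `z_o = F(z_i)`,
`z_i · d/dz_i log( z_i/(p_{k_1}(z_i) p_{k_2−1}(F(z_i))) )
  = H(z_i,z_o)/(1 + φ_{k_2−1}(z_o) − φ_{k_2}(z_o))`. -/
theorem stmt13 (k1 k2 : ℕ) (h1 : 2 ≤ k1) (h2 : 2 ≤ k2) (F : ℝ → ℝ)
    (hF : ∀ z : ℝ, 0 < z → 0 < F z ∧ truncMean k2 (F z) = truncMean k1 z)
    (zi : ℝ) (hzi : 0 < zi) :
    HasDerivAt (fun z : ℝ => Real.log (z / (poisTail k1 z * poisTail (k2 - 1) (F z))))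
      (Hfun k1 k2 zi (F zi) / (zi * (1 + phiP (k2 - 1) (F zi) - phiP k2 (F zi)))) zi := by
  obtain ⟨m1, rfl⟩ : ∃ m, k1 = m + 2 := ⟨k1 - 2, by omega⟩
  obtain ⟨m2, rfl⟩ : ∃ m, k2 = m + 2 := ⟨k2 - 2, by omega⟩
  have hred : m2 + 2 - 1 = m2 + 1 := rfl
  rw [hred]
  exact stmt13' m1 m2 F hF zi hzi
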